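/- Let R be an L×L real non-singular upper triangular matrix with pairwise distinct diagonal entries, let p_{i,j,k} denote its power factors, let e, q₀ ∈ ℝ^L, let f_opt > 0, and define c_k := (Σ_{i=1}^{L} Σ_{j=i}^{L} e_i p_{i,j,k} q₀(j))/f_opt for k = 1, …, L. Then for every integer t ≥ 1, the expected fitness value F_t := f_opt − eᵀ R^t q₀ satisfies F_t = f_opt (1 − Σ_{k=1}^{L} c_k (λ_k)^{t-1}), where λ_k = r_{k,k}. -/

import Mathlib

open Matrix Finset

/-- The power factors `p i j k` of a matrix with entries `r i j`
(indices `1, …, L`), defined recursively by: `p j j j = r j j`;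
`p i j k = 0` if `k < i` or `k > j`;
`p i j k = (∑ l = k to j-1, p i l k * r l j) / (r k k - r j j)` for `i ≤ k < j`;
`p i j j = r i j - ∑ l = i to j-1, p i j l` for `i < j`. -/
noncomputable def powerFactor (r : ℕ → ℕ → ℝ) : ℕ → ℕ → ℕ → ℝ
  | i, j, k =>
    if _h0 : k < i ∨ j < k then 0
    else if _h1 : k < j then
      (∑ l ∈ (Finset.Icc k (j - 1)).attach,
        powerFactor r i l.1 k * r l.1 j) / (r k k - r j j)
    else if _h2 : i < j then
      r i j - ∑ l ∈ (Finset.Icc i (j - 1)).attach, powerFactor r i j l.1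
    else r j j
termination_by i j k => (j, k)
decreasing_by
  · have := Finset.mem_Icc.mp l.2
    exact Prod.Lex.left _ _ (by omega)
  · have := Finset.mem_Icc.mp l.2
    exact Prod.Lex.right _ (by omega)

section Aux
variable (r : ℕ → ℕ → ℝ)

lemma pf_zero {i j k : ℕ} (h : k < i ∨ j < k) : powerFactor r i j k = 0 := by
  rw [powerFactor, dif_pos h]

lemma pf_mid {i j k : ℕ} (h1 : i ≤ k) (h2 : k < j) :
    powerFactor r i j k =
      (∑ l ∈ Finset.Icc k (j-1), powerFactor r i l k * r l j) / (r k k - r j j) := by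
  rw [powerFactor, dif_neg (by omega), dif_pos h2,
    Finset.sum_attach (Finset.Icc k (j-1)) (fun l => powerFactor r i l k * r l j)]

lemma pf_diag_lt {i j : ℕ} (h : i < j) :
    powerFactor r i j j = r i j - ∑ l ∈ Finset.Icc i (j-1), powerFactor r i j l := by
  rw [powerFactor, dif_neg (by omega), dif_neg (by omega), dif_pos h,
    Finset.sum_attach (Finset.Icc i (j-1)) (fun l => powerFactor r i j l)]

lemma pf_diag_eq (j : ℕ) : powerFactor r j j j = r j j := by
  rw [powerFactor, dif_neg (by omega), dif_neg (by omega), dif_neg (by omega)]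

lemma icc_insert {i j : ℕ} (h : i < j) :
    Finset.Icc i j = insert j (Finset.Icc i (j-1)) := by
  ext x; simp [Finset.mem_Icc, Finset.mem_insert]; omega

lemma pf_sum {i j : ℕ} (h : i ≤ j) :
    ∑ k ∈ Finset.Icc i j, powerFactor r i j k = r i j := by
  rcases eq_or_lt_of_le h with rfl | h
  · simp [pf_diag_eq]
  · rw [icc_insert h, Finset.sum_insert (by simp [Finset.mem_Icc]; omega),
      pf_diag_lt r h]
    ring

lemma pf_step (L : ℕ)
    (hdist : ∀ i j, 1 ≤ i → i ≤ L → 1 ≤ j → j ≤ L → i ≠ j → r i i ≠ r j j)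
    {i k j : ℕ} (hi : 1 ≤ i) (hik : i ≤ k) (hkj : k ≤ j) (hjL : j ≤ L) :
    ∑ l ∈ Finset.Icc k j, powerFactor r i l k * r l j
      = powerFactor r i j k * r k k := by
  rcases eq_or_lt_of_le hkj with rfl | h
  · simp
  · have hne : r k k - r j j ≠ 0 :=
      sub_ne_zero.mpr (hdist k j (by omega) (by omega) (by omega) hjL (by omega))
    rw [icc_insert h, Finset.sum_insert (by simp [Finset.mem_Icc]; omega),
      pf_mid r hik h]
    field_simp
    ring

lemma sum_fin_eq_sum_Icc (L : ℕ) (f : ℕ → ℝ) :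
    ∑ a : Fin L, f (a.1 + 1) = ∑ m ∈ Finset.Icc 1 L, f m := by
  rw [Fin.sum_univ_eq_sum_range (fun a => f (a + 1))]
  refine Finset.sum_bij' (fun a _ => a + 1) (fun m _ => m - 1) ?_ ?_ ?_ ?_ ?_ <;>
    intro x hx <;> simp only [Finset.mem_Icc, Finset.mem_range] at hx ⊢ <;> omega

lemma pow_entry (L : ℕ) (r : ℕ → ℕ → ℝ)
    (htri : ∀ i j, 1 ≤ i → i ≤ L → 1 ≤ j → j ≤ L → j < i → r i j = 0)
    (hdist : ∀ i j, 1 ≤ i → i ≤ L → 1 ≤ j → j ≤ L → i ≠ j → r i i ≠ r j j)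
    (R : Matrix (Fin L) (Fin L) ℝ)
    (hR : R = Matrix.of fun a b : Fin L => r (a.val + 1) (b.val + 1)) :
    ∀ t : ℕ, 1 ≤ t → ∀ a b : Fin L,
      (R ^ t) a b = ∑ k ∈ Finset.Icc 1 L,
        powerFactor r (a.1 + 1) (b.1 + 1) k * r k k ^ (t - 1) := by
  intro t ht
  induction t, ht using Nat.le_induction with
  | base =>
    intro a b
    have ha : 1 ≤ a.1 + 1 := by omega
    have hb : b.1 + 1 ≤ L := b.2
    rw [pow_one, hR]
    simp only [Matrix.of_apply, Nat.sub_self, pow_zero, mul_one]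
    rw [← Finset.sum_subset (Finset.Icc_subset_Icc (by omega) (by omega) :
        Finset.Icc (a.1+1) (b.1+1) ⊆ Finset.Icc 1 L)
        (fun x _ hx => pf_zero r (by simp [Finset.mem_Icc] at hx; omega))]
    rcases le_or_gt (a.1+1) (b.1+1) with h | h
    · exact (pf_sum r h).symm
    · rw [Finset.Icc_eq_empty (by omega), Finset.sum_empty,
        htri _ _ ha a.2 (by omega) hb h]
  | succ t ht ih =>
    intro a b
    rw [pow_succ, Matrix.mul_apply]
    have key : ∀ l : Fin L, (R ^ t) a l * R l b =
        ∑ k ∈ Finset.Icc 1 L,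
          powerFactor r (a.1+1) (l.1+1) k * r k k ^ (t-1) * r (l.1+1) (b.1+1) := by
      intro l
      rw [ih a l, hR, Finset.sum_mul]
      simp only [Matrix.of_apply]
    simp only [key]
    rw [Finset.sum_comm]
    refine Finset.sum_congr rfl fun k hk => ?_
    have hkL := Finset.mem_Icc.mp hk
    set i := a.1 + 1 with hi
    set j := b.1 + 1 with hj
    have hiL : 1 ≤ i ∧ i ≤ L := ⟨by omega, a.2⟩
    have hjL : 1 ≤ j ∧ j ≤ L := ⟨by omega, b.2⟩
    have hfin : ∑ l : Fin L, powerFactor r i (l.1+1) k * r k k ^ (t-1) * r (l.1+1) j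
        = ∑ m ∈ Finset.Icc 1 L, powerFactor r i m k * r k k ^ (t-1) * r m j :=
      sum_fin_eq_sum_Icc L (fun m => powerFactor r i m k * r k k ^ (t-1) * r m j)
    rw [hfin]
    have hpow : r k k ^ (t + 1 - 1) = r k k ^ (t - 1) * r k k := by
      rw [← pow_succ]; congr 1; omega
    rcases le_or_gt i k with hik | hik
    · rcases le_or_gt k j with hkj | hkj
      · -- main case: i ≤ k ≤ j
        rw [← Finset.sum_subset (Finset.Icc_subset_Icc (by omega) (by omega) :
            Finset.Icc k j ⊆ Finset.Icc 1 L)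
            (fun x hx1 hx2 => ?_), ]
        · have := pf_step r L hdist hiL.1 hik hkj hjL.2
          calc ∑ m ∈ Finset.Icc k j, powerFactor r i m k * r k k ^ (t-1) * r m j
              = (∑ m ∈ Finset.Icc k j, powerFactor r i m k * r m j) * r k k ^ (t-1) := by
                rw [Finset.sum_mul]; exact Finset.sum_congr rfl fun m _ => by ring
            _ = powerFactor r i j k * r k k ^ (t + 1 - 1) := by rw [this, hpow]; ring
        · simp only [Finset.mem_Icc] at hx1 hx2
          rcases le_or_gt x j with hxj | hxj
          · rw [pf_zero r (by omega)]; ring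
          · rw [htri x j (by omega) (by omega) hjL.1 hjL.2 hxj]; ring
      · -- k > j : everything vanishes
        rw [pf_zero r (Or.inr hkj)]
        rw [Finset.sum_eq_zero fun m hm => ?_]
        · ring
        · simp only [Finset.mem_Icc] at hm
          rcases le_or_gt m j with hmj | hmj
          · rw [pf_zero r (Or.inr (by omega))]; ring
          · rw [htri m j (by omega) (by omega) hjL.1 hjL.2 hmj]; ring
    · -- k < i
      rw [pf_zero r (Or.inl hik)]
      rw [Finset.sum_eq_zero fun m hm => by rw [pf_zero r (Or.inl hik)]; ring]
      ring

lemma pf_zero' {i j : ℕ} (h : j < i) (k : ℕ) : powerFactor r i j k = 0 := by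
  rcases lt_or_ge k i with hk | hk
  · exact pf_zero r (Or.inl hk)
  · exact pf_zero r (Or.inr (by omega))

end Aux

/-- Corollary 1: under the same setting as Theorem 1, the
expected fitness value `F t = f_opt − eᵀ R^t q₀` satisfies, for every `t ≥ 1`,
`F t = f_opt * (1 − ∑_{k=1}^{L} c k * (λ k)^(t-1))` where `λ k = r k k`. -/
theorem fitness_value_closed_form
    (L : ℕ) (hL : 1 ≤ L) (r : ℕ → ℕ → ℝ)
    (htri : ∀ i j, 1 ≤ i → i ≤ L → 1 ≤ j → j ≤ L → j < i → r i j = 0)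
    (hnonsing : ∀ i, 1 ≤ i → i ≤ L → r i i ≠ 0)
    (hdist : ∀ i j, 1 ≤ i → i ≤ L → 1 ≤ j → j ≤ L → i ≠ j → r i i ≠ r j j)
    (R : Matrix (Fin L) (Fin L) ℝ)
    (hR : R = Matrix.of fun a b : Fin L => r (a.val + 1) (b.val + 1))
    (e q₀ : ℕ → ℝ) (fopt : ℝ) (hfopt : 0 < fopt)
    (F : ℕ → ℝ)
    (hF : ∀ t : ℕ, F t = fopt -
      ((fun a : Fin L => e (a.val + 1)) ⬝ᵥ
        ((R ^ t) *ᵥ fun a : Fin L => q₀ (a.val + 1))))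
    (c : ℕ → ℝ)
    (hc : ∀ k, c k =
      (∑ i ∈ Finset.Icc 1 L, ∑ j ∈ Finset.Icc i L,
        e i * powerFactor r i j k * q₀ j) / fopt) :
    ∀ t : ℕ, 1 ≤ t →
      F t = fopt * (1 - ∑ k ∈ Finset.Icc 1 L, c k * (r k k) ^ (t - 1)) := by
  intro t ht
  have hfne : fopt ≠ 0 := ne_of_gt hfopt
  have hpe := pow_entry L r htri hdist R hR t ht
  have key : ((fun a : Fin L => e (a.val + 1)) ⬝ᵥ
        ((R ^ t) *ᵥ fun a : Fin L => q₀ (a.val + 1)))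
      = ∑ k ∈ Finset.Icc 1 L, c k * r k k ^ (t - 1) * fopt := by
    have L1 : ((fun a : Fin L => e (a.val + 1)) ⬝ᵥ
          ((R ^ t) *ᵥ fun a : Fin L => q₀ (a.val + 1)))
        = ∑ a : Fin L, ∑ b : Fin L, ∑ k ∈ Finset.Icc 1 L,
            e (a.1+1) * powerFactor r (a.1+1) (b.1+1) k * q₀ (b.1+1)
              * r k k ^ (t-1) := by
      simp only [dotProduct, Matrix.mulVec, hpe, Finset.sum_mul,
        Finset.mul_sum]
      exact Finset.sum_congr rfl fun a _ => Finset.sum_congr rfl fun b _ =>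
        Finset.sum_congr rfl fun k _ => by ring
    rw [L1]
    calc ∑ a : Fin L, ∑ b : Fin L, ∑ k ∈ Finset.Icc 1 L,
            e (a.1+1) * powerFactor r (a.1+1) (b.1+1) k * q₀ (b.1+1)
              * r k k ^ (t-1)
        = ∑ a : Fin L, ∑ k ∈ Finset.Icc 1 L, ∑ b : Fin L,
            e (a.1+1) * powerFactor r (a.1+1) (b.1+1) k * q₀ (b.1+1)
              * r k k ^ (t-1) :=
          Finset.sum_congr rfl fun a _ => Finset.sum_comm
      _ = ∑ k ∈ Finset.Icc 1 L, ∑ a : Fin L, ∑ b : Fin L,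
            e (a.1+1) * powerFactor r (a.1+1) (b.1+1) k * q₀ (b.1+1)
              * r k k ^ (t-1) := Finset.sum_comm
      _ = ∑ k ∈ Finset.Icc 1 L, c k * r k k ^ (t - 1) * fopt := ?_
    refine Finset.sum_congr rfl fun k _ => ?_
    have e1 : ∀ a : Fin L, (∑ b : Fin L,
          e (a.1+1) * powerFactor r (a.1+1) (b.1+1) k * q₀ (b.1+1)
            * r k k ^ (t-1))
        = ∑ j ∈ Finset.Icc 1 L,
            e (a.1+1) * powerFactor r (a.1+1) j k * q₀ j * r k k ^ (t-1) :=
      fun a => sum_fin_eq_sum_Icc L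
        (fun j => e (a.1+1) * powerFactor r (a.1+1) j k * q₀ j * r k k ^ (t-1))
    simp only [e1]
    rw [sum_fin_eq_sum_Icc L (fun i => ∑ j ∈ Finset.Icc 1 L,
      e i * powerFactor r i j k * q₀ j * r k k ^ (t-1))]
    have e2 : ∀ i ∈ Finset.Icc 1 L,
        (∑ j ∈ Finset.Icc 1 L, e i * powerFactor r i j k * q₀ j * r k k ^ (t-1))
        = (∑ j ∈ Finset.Icc i L, e i * powerFactor r i j k * q₀ j)
            * r k k ^ (t-1) := by
      intro i hi
      have hi' := Finset.mem_Icc.mp hi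
      rw [← Finset.sum_subset (Finset.Icc_subset_Icc (by omega) le_rfl :
          Finset.Icc i L ⊆ Finset.Icc 1 L) (fun x hx1 hx2 => ?_),
        Finset.sum_mul]
      simp only [Finset.mem_Icc] at hx1 hx2
      rw [pf_zero' r (by omega) k]
      ring
    rw [Finset.sum_congr rfl e2, ← Finset.sum_mul, hc k]
    field_simp
  rw [hF t, key, ← Finset.sum_mul]
  ring
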